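/- Matrices X_1, ..., X_n ∈ St_F(d,r) achieve equality in the Stiefel simplex bound, min_{i≠j} ||X_i - X_j||_Fro = sqrt(2rn/(n-1)), if and only if all pairwise Frobenius distances are equal and sum_i X_i = 0. -/

import Mathlib

open Matrix Finset

section aux
variable {𝕜 : Type*} [RCLike 𝕜]

lemma re_conj_mul_comm (u v : 𝕜) :
    RCLike.re ((starRingEnd 𝕜) v * u) = RCLike.re ((starRingEnd 𝕜) u * v) := by
  rw [← RCLike.conj_re]
  congr 1
  rw [_root_.map_mul, RCLike.conj_conj, mul_comm]

lemma norm_sub_sq' (u v : 𝕜) :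
    ‖u - v‖^2 = RCLike.re ((starRingEnd 𝕜) u * u) + RCLike.re ((starRingEnd 𝕜) v * v)
      - 2 * RCLike.re ((starRingEnd 𝕜) u * v) := by
  have h : ((‖u - v‖^2 : ℝ) : 𝕜) = (starRingEnd 𝕜) (u - v) * (u - v) := by
    push_cast
    rw [RCLike.conj_mul]
  have h2 := congrArg RCLike.re h
  rw [RCLike.ofReal_re] at h2
  rw [h2, map_sub, sub_mul, mul_sub, mul_sub]
  simp only [map_sub, map_add]
  rw [re_conj_mul_comm v u]
  ring

variable {d r n : ℕ}

lemma frob_sq_expand (A B : Matrix (Fin d) (Fin r) 𝕜) :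
    (∑ a, ∑ b, ‖A a b - B a b‖^2) =
      RCLike.re (∑ a, ∑ b, (starRingEnd 𝕜) (A a b) * A a b)
      + RCLike.re (∑ a, ∑ b, (starRingEnd 𝕜) (B a b) * B a b)
      - 2 * RCLike.re (∑ a, ∑ b, (starRingEnd 𝕜) (A a b) * B a b) := by
  simp only [map_sum, Finset.mul_sum, ← Finset.sum_add_distrib, ← Finset.sum_sub_distrib]
  exact Finset.sum_congr rfl fun a _ => Finset.sum_congr rfl fun b _ => norm_sub_sq' _ _

lemma diag_trace (A : Matrix (Fin d) (Fin r) 𝕜) (hA : Aᴴ * A = 1) :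
    RCLike.re (∑ a, ∑ b, (starRingEnd 𝕜) (A a b) * A a b) = r := by
  have ht : Matrix.trace (Aᴴ * A) = (r : 𝕜) := by
    rw [hA, Matrix.trace_one]
    simp
  have h2 : Matrix.trace (Aᴴ * A) = ∑ b, ∑ a, (starRingEnd 𝕜) (A a b) * A a b := by
    simp [Matrix.trace, Matrix.mul_apply, Matrix.conjTranspose_apply, Matrix.diag]
  rw [Finset.sum_comm, ← h2, ht]
  simp

lemma sum_sum_re (S : Matrix (Fin d) (Fin r) 𝕜) :
    RCLike.re (∑ a, ∑ b, (starRingEnd 𝕜) (S a b) * S a b) = ∑ a, ∑ b, ‖S a b‖^2 := by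
  simp only [map_sum]
  refine Finset.sum_congr rfl fun a _ => Finset.sum_congr rfl fun b _ => ?_
  rw [RCLike.conj_mul, ← RCLike.ofReal_pow, RCLike.ofReal_re]

lemma swap4 {M : Type*} [AddCommMonoid M] {ι₁ ι₂ ι₃ ι₄ : Type*} [Fintype ι₁] [Fintype ι₂]
    [Fintype ι₃] [Fintype ι₄] (f : ι₁ → ι₂ → ι₃ → ι₄ → M) :
    ∑ i, ∑ j, ∑ a, ∑ b, f i j a b = ∑ a, ∑ b, ∑ i, ∑ j, f i j a b :=
  calc ∑ i, ∑ j, ∑ a, ∑ b, f i j a b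
      = ∑ i, ∑ a, ∑ b, ∑ j, f i j a b := Finset.sum_congr rfl fun i _ => by
        rw [Finset.sum_comm]; exact Finset.sum_congr rfl fun a _ => Finset.sum_comm
    _ = ∑ a, ∑ i, ∑ b, ∑ j, f i j a b := Finset.sum_comm
    _ = ∑ a, ∑ b, ∑ i, ∑ j, f i j a b := Finset.sum_congr rfl fun a _ => Finset.sum_comm

lemma sum_eq_forcing {α : Type*} (s : Finset α) (f : α → ℝ) (c : ℝ)
    (h1 : ∀ x ∈ s, c ≤ f x) (h2 : ∑ x ∈ s, f x ≤ s.card * c) :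
    ∀ x ∈ s, f x = c := by
  have h3 : ∑ x ∈ s, (f x - c) ≤ 0 := by
    rw [Finset.sum_sub_distrib, Finset.sum_const, nsmul_eq_mul]; linarith
  have h4 : ∑ x ∈ s, (f x - c) = 0 :=
    le_antisymm h3 (Finset.sum_nonneg fun x hx => by linarith [h1 x hx])
  intro x hx
  have h5 := (Finset.sum_eq_zero_iff_of_nonneg (fun x hx => by linarith [h1 x hx])).1 h4 x hx
  linarith

end aux

/-- The Frobenius (chordal) distance between two matrices. -/
noncomputable def frobDist {𝕜 : Type*} [RCLike 𝕜] {d r : ℕ}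
    (X Y : Matrix (Fin d) (Fin r) 𝕜) : ℝ :=
  Real.sqrt (∑ i, ∑ j, ‖X i j - Y i j‖ ^ 2)

theorem stiefel_simplex_equality {𝕜 : Type*} [RCLike 𝕜] (d r n : ℕ) (hn : 2 ≤ n)
    (X : Fin n → Matrix (Fin d) (Fin r) 𝕜)
    (hSt : ∀ i, (X i)ᴴ * X i = 1) :
    IsLeast {s : ℝ | ∃ i j : Fin n, i ≠ j ∧ s = frobDist (X i) (X j)}
        (Real.sqrt (2 * r * n / ((n : ℝ) - 1))) ↔
      ((∀ i j k l : Fin n, i ≠ j → k ≠ l →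
          frobDist (X i) (X j) = frobDist (X k) (X l)) ∧
        ∑ i, X i = 0) := by
  classical
  have hn1 : (0:ℝ) < (n:ℝ) - 1 := by
    have : (2:ℝ) ≤ n := by exact_mod_cast hn
    linarith
  set c : ℝ := 2 * r * n / ((n:ℝ) - 1) with hc
  have hc0 : 0 ≤ c := by positivity
  have hkey : (n:ℝ) * ((n:ℝ)-1) * c = 2 * r * n^2 := by
    rw [hc]; field_simp <;> ring
  set S := ∑ i, X i with hSdef
  set Q : ℝ := ∑ a, ∑ b, ‖S a b‖^2 with hQdef
  have hQnonneg : 0 ≤ Q := Finset.sum_nonneg fun _ _ => Finset.sum_nonneg fun _ _ => sq_nonneg _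
  set D : Fin n → Fin n → ℝ := fun i j => ∑ a, ∑ b, ‖X i a b - X j a b‖^2 with hDdef
  have hfd : ∀ i j, frobDist (X i) (X j) = Real.sqrt (D i j) := fun i j => rfl
  have hDnonneg : ∀ i j, 0 ≤ D i j :=
    fun i j => Finset.sum_nonneg fun _ _ => Finset.sum_nonneg fun _ _ => sq_nonneg _
  have hDexp : ∀ i j, D i j = 2 * r -
      2 * RCLike.re (∑ a, ∑ b, (starRingEnd 𝕜) (X i a b) * X j a b) := by
    intro i j
    show (∑ a, ∑ b, ‖X i a b - X j a b‖^2) = _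
    rw [frob_sq_expand, diag_trace _ (hSt i), diag_trace _ (hSt j)]
    ring
  have hDdiag : ∀ i, D i i = 0 := by
    intro i
    show (∑ a, ∑ b, ‖X i a b - X i a b‖^2) = 0
    simp
  -- the grand sum identity
  have h1 : ∑ i, ∑ j, RCLike.re (∑ a, ∑ b, (starRingEnd 𝕜) (X i a b) * X j a b) = Q := by
    simp only [← map_sum]
    rw [swap4]
    have h2 : (∑ a, ∑ b, ∑ i, ∑ j, (starRingEnd 𝕜) (X i a b) * X j a b)
        = ∑ a, ∑ b, (starRingEnd 𝕜) (S a b) * S a b :=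
      Finset.sum_congr rfl fun a _ => Finset.sum_congr rfl fun b _ => by
        rw [← Finset.sum_mul_sum, hSdef]
        simp [Matrix.sum_apply, map_sum]
    rw [h2, sum_sum_re]
  have htot : ∑ i, ∑ j, D i j = 2 * r * n^2 - 2 * Q := by
    have expand : ∑ i, ∑ j, D i j = ∑ i : Fin n, ∑ j : Fin n, ((2*(r:ℝ)) -
        2 * RCLike.re (∑ a, ∑ b, (starRingEnd 𝕜) (X i a b) * X j a b)) :=
      Finset.sum_congr rfl fun i _ => Finset.sum_congr rfl fun j _ => hDexp i j
    rw [expand]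
    simp only [Finset.sum_sub_distrib, Finset.sum_const, Finset.card_univ, Fintype.card_fin,
      nsmul_eq_mul, ← Finset.mul_sum]
    rw [h1]
    ring
  -- off-diagonal index set
  set s : Finset (Fin n × Fin n) := Finset.univ.offDiag with hs
  have hmem_s : ∀ p : Fin n × Fin n, p ∈ s ↔ p.1 ≠ p.2 := by
    intro p; simp [hs, Finset.mem_offDiag]
  have hcard : (s.card : ℝ) = n * ((n:ℝ) - 1) := by
    have h : s.card = n * (n - 1) := by
      rw [hs, Finset.offDiag_card, Finset.card_univ, Fintype.card_fin, ← Nat.mul_pred]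
      rfl
    rw [h, Nat.cast_mul, Nat.cast_sub (by omega : 1 ≤ n), Nat.cast_one]
  have hsplit : ∑ p ∈ s, D p.1 p.2 = ∑ i, ∑ j, D i j := by
    rw [← Finset.sum_product' (f := fun i j => D i j)]
    apply Finset.sum_subset
    · intro p hp; simp
    · intro p _ hp
      have hpe : p.1 = p.2 := by
        by_contra h
        exact hp ((hmem_s p).2 h)
      rw [hpe]
      exact hDdiag _
  constructor
  · rintro ⟨-, hlb⟩
    have hDlb : ∀ p ∈ s, c ≤ D p.1 p.2 := by
      intro p hp
      have hne : p.1 ≠ p.2 := (hmem_s p).1 hp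
      have hB : Real.sqrt c ≤ frobDist (X p.1) (X p.2) := hlb ⟨p.1, p.2, hne, rfl⟩
      rw [hfd] at hB
      calc c = Real.sqrt c ^ 2 := (Real.sq_sqrt hc0).symm
        _ ≤ Real.sqrt (D p.1 p.2) ^ 2 := by gcongr <;> positivity
        _ = D p.1 p.2 := Real.sq_sqrt (hDnonneg _ _)
    have hsum_lb : (s.card : ℝ) * c ≤ ∑ p ∈ s, D p.1 p.2 := by
      calc (s.card:ℝ)*c = ∑ _p ∈ s, c := by rw [Finset.sum_const, nsmul_eq_mul]
        _ ≤ _ := Finset.sum_le_sum hDlb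
    have hQ0 : Q = 0 := by
      rw [hsplit, htot, hcard] at hsum_lb
      linarith [hkey, hQnonneg]
    have hS0 : S = 0 := by
      ext a b
      have ha := (Finset.sum_eq_zero_iff_of_nonneg
        (fun a _ => Finset.sum_nonneg fun b _ => sq_nonneg ‖S a b‖)).1 hQ0.symm.symm
        a (Finset.mem_univ a)
      have hb := (Finset.sum_eq_zero_iff_of_nonneg (fun b _ => sq_nonneg ‖S a b‖)).1 ha
        b (Finset.mem_univ b)
      have : ‖S a b‖ = 0 := by nlinarith [norm_nonneg (S a b)]
      simpa using this
    have hsum_eq : ∑ p ∈ s, D p.1 p.2 ≤ (s.card : ℝ) * c := by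
      rw [hsplit, htot, hQ0, hcard]
      linarith [hkey]
    have hDeq := sum_eq_forcing s _ c hDlb hsum_eq
    refine ⟨fun i j k l hij hkl => ?_, hS0⟩
    have e1 : D i j = c := hDeq (i, j) ((hmem_s (i, j)).2 hij)
    have e2 : D k l = c := hDeq (k, l) ((hmem_s (k, l)).2 hkl)
    rw [hfd, hfd, e1, e2]
  · rintro ⟨heq, hS0⟩
    have hQ0 : Q = 0 := by
      rw [hQdef, hS0]
      simp
    have hne : (⟨0, by omega⟩ : Fin n) ≠ ⟨1, by omega⟩ := by simp [Fin.ext_iff]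
    set i0 : Fin n := ⟨0, by omega⟩
    set i1 : Fin n := ⟨1, by omega⟩
    have hDconst : ∀ p ∈ s, D p.1 p.2 = D i0 i1 := by
      intro p hp
      have he := heq p.1 p.2 i0 i1 ((hmem_s p).1 hp) hne
      rw [hfd, hfd] at he
      calc D p.1 p.2 = Real.sqrt (D p.1 p.2)^2 := (Real.sq_sqrt (hDnonneg _ _)).symm
        _ = Real.sqrt (D i0 i1) ^2 := by rw [he]
        _ = D i0 i1 := Real.sq_sqrt (hDnonneg _ _)
    have hsum : (s.card : ℝ) * D i0 i1 = 2*r*(n:ℝ)^2 := by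
      have h2 : ∑ p ∈ s, D p.1 p.2 = (s.card : ℝ) * D i0 i1 := by
        rw [Finset.sum_congr rfl hDconst, Finset.sum_const, nsmul_eq_mul]
      rw [← h2, hsplit, htot, hQ0]
      ring
    have hc0' : D i0 i1 = c := by
      rw [hcard] at hsum
      have hne' : (n:ℝ) * ((n:ℝ)-1) ≠ 0 := by positivity
      exact mul_left_cancel₀ hne' (hsum.trans hkey.symm)
    constructor
    · exact ⟨i0, i1, hne, by rw [hfd, hc0']⟩
    · rintro x ⟨i, j, hij, rfl⟩
      have : D i j = c := (hDconst (i, j) ((hmem_s (i, j)).2 hij)).trans hc0'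
      rw [hfd, this]
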